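/- arXiv:2503.05606 — 2 statements merged into one kernel-verified Lean document; each statement's English description precedes it below -/
import Mathlib

section
/- Under the standing assumptions on N, set q := Λ₂/Λ₁. Then for all s, t ∈ [t₀, T] with s ≤ t and every x ∈ ℝ^d one has the first-derivative bounds ‖DΦ_{s,t}(x)‖ ≤ e^{Λ₁(t−s)} and ‖DΦ_{t,s}(x)‖ ≤ e^{Λ₁(t−s)}, and the second-derivative bounds ‖D²Φ_{s,t}(x)‖ ≤ q·(e^{2Λ₁(t−s)} − e^{Λ₁(t−s)}) and ‖D²Φ_{t,s}(x)‖ ≤ q·(e^{2Λ₁(t−s)} − e^{Λ₁(t−s)}), where D²Φ is measured in the norm of bilinear maps on ℝ^d. -/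
open Set

private lemma gron_exp_deriv (c a τ : ℝ) :
    HasDerivAt (fun σ => Real.exp (c * (σ - a))) (c * Real.exp (c * (τ - a))) τ := by
  have h : HasDerivAt (fun σ : ℝ => c * (σ - a)) c τ := by
    simpa using ((hasDerivAt_id τ).sub_const a).const_mul c
  simpa [mul_comm] using h.exp

private lemma gron1 {E : Type*} [NormedAddCommGroup E] [NormedSpace ℝ E]
    {u : ℝ → E} {u' : ℝ → E} {K δ a b : ℝ} (hab : a ≤ b)
    (hu : ∀ τ ∈ Icc a b, HasDerivAt u (u' τ) τ)
    (ha : ‖u a‖ ≤ δ)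
    (hbound : ∀ τ ∈ Icc a b, ‖u' τ‖ ≤ K * ‖u τ‖) :
    ‖u b‖ ≤ δ * Real.exp (K * (b - a)) := by
  have h := norm_le_gronwallBound_of_norm_deriv_right_le (f := u) (f' := u')
    (δ := δ) (K := K) (ε := 0) (a := a) (b := b)
    (fun τ hτ => (hu τ hτ).continuousAt.continuousWithinAt)
    (fun τ hτ => (hu τ ⟨hτ.1, hτ.2.le⟩).hasDerivWithinAt)
    ha (fun τ hτ => by simpa using hbound τ ⟨hτ.1, hτ.2.le⟩) b ⟨hab, le_refl b⟩
  simpa [gronwallBound_ε0] using h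

private lemma gron2 {E : Type*} [NormedAddCommGroup E] [NormedSpace ℝ E]
    {u : ℝ → E} {u' : ℝ → E} {a b Λ₁ c : ℝ} (hΛ₁ : 0 < Λ₁) (hab : a ≤ b)
    (hu : ∀ τ ∈ Icc a b, HasDerivAt u (u' τ) τ)
    (h0 : u a = 0)
    (hbound : ∀ τ ∈ Icc a b, ‖u' τ‖ ≤ Λ₁ * ‖u τ‖ + c * Real.exp (2 * Λ₁ * (τ - a))) :
    ‖u b‖ ≤ (c / Λ₁) * (Real.exp (2 * Λ₁ * (b - a)) - Real.exp (Λ₁ * (b - a))) := by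
  have key : ∀ η > (0:ℝ), ‖u b‖ ≤
      (c / Λ₁) * (Real.exp (2 * Λ₁ * (b - a)) - Real.exp (Λ₁ * (b - a)))
      + η * Real.exp (2 * Λ₁ * (b - a)) := by
    intro η hη
    set B : ℝ → ℝ := fun τ =>
      (c / Λ₁) * (Real.exp (2 * Λ₁ * (τ - a)) - Real.exp (Λ₁ * (τ - a)))
        + η * Real.exp (2 * Λ₁ * (τ - a)) with hBdef
    set B' : ℝ → ℝ := fun τ =>
      (c / Λ₁) * ((2 * Λ₁) * Real.exp (2 * Λ₁ * (τ - a)) - Λ₁ * Real.exp (Λ₁ * (τ - a)))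
        + η * ((2 * Λ₁) * Real.exp (2 * Λ₁ * (τ - a))) with hB'def
    have hBd : ∀ τ, HasDerivAt B (B' τ) τ := fun τ =>
      (((gron_exp_deriv (2 * Λ₁) a τ).sub (gron_exp_deriv Λ₁ a τ)).const_mul (c / Λ₁)).add
        ((gron_exp_deriv (2 * Λ₁) a τ).const_mul η)
    have ha0 : ‖u a‖ ≤ B a := by
      simp [hBdef, h0]
      positivity
    have hbd : ∀ τ ∈ Ico a b, ‖u τ‖ = B τ → ‖u' τ‖ < B' τ := by
      intro τ hτ hEq
      have hEq2 : Λ₁ * B τ + c * Real.exp (2 * Λ₁ * (τ - a))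
          + Λ₁ * η * Real.exp (2 * Λ₁ * (τ - a)) = B' τ := by
        simp only [hBdef, hB'def]
        field_simp
        ring
      have hpos : 0 < Λ₁ * η * Real.exp (2 * Λ₁ * (τ - a)) := by positivity
      have h1 := hbound τ ⟨hτ.1, hτ.2.le⟩
      rw [hEq] at h1
      linarith
    have := image_norm_le_of_norm_deriv_right_lt_deriv_boundary
      (fun τ hτ => (hu τ hτ).continuousAt.continuousWithinAt)
      (fun τ hτ => (hu τ ⟨hτ.1, hτ.2.le⟩).hasDerivWithinAt)
      ha0 hBd hbd ⟨hab, le_refl b⟩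
    simpa [hBdef] using this
  refine le_of_forall_pos_le_add fun ε hε => ?_
  have h := key (ε / Real.exp (2 * Λ₁ * (b - a))) (by positivity)
  rwa [div_mul_cancel₀ _ (Real.exp_pos _).ne'] at h


open Set

/-- Under the standing assumptions on the nonautonomous vector field `N`
(bounded measurable in time, `C²` in space, with `‖DN_t‖ ≤ Λ₁` and `‖D²N_t‖ ≤ Λ₂`), the
nonautonomous flow `Φ` of `N` (with group laws, first and second variational equations)
satisfies, for `t₀ ≤ s ≤ t ≤ T` and every `x`, the bounds
`‖DΦ_{s,t}(x)‖ ≤ e^{Λ₁(t−s)}`, `‖DΦ_{t,s}(x)‖ ≤ e^{Λ₁(t−s)}`,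
`‖D²Φ_{s,t}(x)‖ ≤ (Λ₂/Λ₁)(e^{2Λ₁(t−s)} − e^{Λ₁(t−s)})` and
`‖D²Φ_{t,s}(x)‖ ≤ (Λ₂/Λ₁)(e^{2Λ₁(t−s)} − e^{Λ₁(t−s)})`. -/
theorem stmt0
    (d : ℕ) (t₀ T Λ₁ Λ₂ : ℝ) (ht : t₀ < T) (hΛ₁ : 0 < Λ₁) (hΛ₂ : 0 < Λ₂)
    (N : ℝ → EuclideanSpace ℝ (Fin d) → EuclideanSpace ℝ (Fin d))
    -- boundedness and measurability in time
    (hNmeas : ∀ x, Measurable fun t => N t x)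
    (hNbdd : ∀ x, ∃ M : ℝ, ∀ t ∈ Icc t₀ T, ‖N t x‖ ≤ M)
    -- C² regularity in space
    (hNC2 : ∀ t, ContDiff ℝ 2 (N t))
    -- uniform bounds on the first and second spatial derivatives
    (hDN : ∀ t w, ‖fderiv ℝ (N t) w‖ ≤ Λ₁)
    (hD2N : ∀ t w, ‖fderiv ℝ (fderiv ℝ (N t)) w‖ ≤ Λ₂)
    -- the nonautonomous flow of N
    (Φ : ℝ → ℝ → EuclideanSpace ℝ (Fin d) → EuclideanSpace ℝ (Fin d))
    (DΦ : ℝ → ℝ → EuclideanSpace ℝ (Fin d) →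
      (EuclideanSpace ℝ (Fin d) →L[ℝ] EuclideanSpace ℝ (Fin d)))
    (D2Φ : ℝ → ℝ → EuclideanSpace ℝ (Fin d) →
      (EuclideanSpace ℝ (Fin d) →L[ℝ]
        (EuclideanSpace ℝ (Fin d) →L[ℝ] EuclideanSpace ℝ (Fin d))))
    (hflow_init : ∀ s x, Φ s s x = x)
    (hflow_ode : ∀ s x, ∀ t ∈ Icc t₀ T, HasDerivAt (fun τ => Φ s τ x) (N t (Φ s t x)) t)
    (hgroup : ∀ t₁ t₂ t₃ : ℝ, ∀ x, Φ t₂ t₃ (Φ t₁ t₂ x) = Φ t₁ t₃ x)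
    (hinv : ∀ s t : ℝ, ∀ x, Φ t s (Φ s t x) = x)
    -- spatial differentiability of the flow and the first variational equation
    (hΦC2 : ∀ s t : ℝ, ContDiff ℝ 2 (Φ s t))
    (hDΦ_fderiv : ∀ s t x, DΦ s t x = fderiv ℝ (Φ s t) x)
    (hDΦ_init : ∀ s x, DΦ s s x = ContinuousLinearMap.id ℝ (EuclideanSpace ℝ (Fin d)))
    (hDΦ_ode : ∀ s x, ∀ t ∈ Icc t₀ T,
      HasDerivAt (fun τ => DΦ s τ x) ((fderiv ℝ (N t) (Φ s t x)).comp (DΦ s t x)) t)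
    -- second spatial derivative of the flow and the second variational equation
    (hD2Φ_init : ∀ s x, D2Φ s s x = 0)
    (hD2Φ_ode : ∀ s x, ∀ t ∈ Icc t₀ T, ∀ v w : EuclideanSpace ℝ (Fin d),
      HasDerivAt (fun τ => D2Φ s τ x v w)
        (fderiv ℝ (N t) (Φ s t x) (D2Φ s t x v w)
          + fderiv ℝ (fderiv ℝ (N t)) (Φ s t x) (DΦ s t x v) (DΦ s t x w)) t) :
    ∀ s ∈ Icc t₀ T, ∀ t ∈ Icc t₀ T, s ≤ t → ∀ x : EuclideanSpace ℝ (Fin d),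
      ‖DΦ s t x‖ ≤ Real.exp (Λ₁ * (t - s)) ∧
      ‖DΦ t s x‖ ≤ Real.exp (Λ₁ * (t - s)) ∧
      ‖D2Φ s t x‖ ≤ (Λ₂ / Λ₁) * (Real.exp (2 * Λ₁ * (t - s)) - Real.exp (Λ₁ * (t - s))) ∧
      ‖D2Φ t s x‖ ≤ (Λ₂ / Λ₁) * (Real.exp (2 * Λ₁ * (t - s)) - Real.exp (Λ₁ * (t - s))) := by
  -- First-derivative bounds, forward in time
  have fwd1 : ∀ a ∈ Icc t₀ T, ∀ b ∈ Icc t₀ T, a ≤ b → ∀ x,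
      ‖DΦ a b x‖ ≤ Real.exp (Λ₁ * (b - a)) := by
    intro a ha b hb hab x
    have h := gron1 (u := fun τ => DΦ a τ x)
      (u' := fun τ => (fderiv ℝ (N τ) (Φ a τ x)).comp (DΦ a τ x))
      (K := Λ₁) (δ := 1) hab
      (fun τ hτ => hDΦ_ode a x τ ⟨ha.1.trans hτ.1, hτ.2.trans hb.2⟩)
      (by show ‖DΦ a a x‖ ≤ 1
          rw [hDΦ_init]; exact ContinuousLinearMap.norm_id_le)
      (fun τ hτ => (ContinuousLinearMap.opNorm_comp_le _ _).trans
        (mul_le_mul_of_nonneg_right (hDN _ _) (norm_nonneg _)))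
    simpa only [one_mul] using h
  -- First-derivative bound, backward in time
  have bwd1 : ∀ a ∈ Icc t₀ T, ∀ b ∈ Icc t₀ T, a ≤ b → ∀ x,
      ‖DΦ b a x‖ ≤ Real.exp (Λ₁ * (b - a)) := by
    intro a ha b hb hab x
    have hmem : ∀ σ ∈ Icc a b, a + b - σ ∈ Icc t₀ T := by
      intro σ hσ
      constructor
      · linarith [ha.1, hσ.2]
      · linarith [hb.2, hσ.1]
    have hu : ∀ σ ∈ Icc a b, HasDerivAt (fun σ => DΦ b (a + b - σ) x)
        (-((fderiv ℝ (N (a + b - σ)) (Φ b (a + b - σ) x)).comp (DΦ b (a + b - σ) x))) σ := by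
      intro σ hσ
      have hinner : HasDerivAt (fun σ : ℝ => a + b - σ) (-1) σ := by
        simpa using (hasDerivAt_id' σ).const_sub (a + b)
      have := (hDΦ_ode b x (a + b - σ) (hmem σ hσ)).scomp σ hinner
      simpa [Function.comp_def] using this
    have h := gron1 (u := fun σ => DΦ b (a + b - σ) x)
      (u' := fun σ => -((fderiv ℝ (N (a+b-σ)) (Φ b (a+b-σ) x)).comp (DΦ b (a+b-σ) x)))
      (K := Λ₁) (δ := 1) hab hu
      (by
        show ‖DΦ b (a + b - a) x‖ ≤ 1
        rw [add_sub_cancel_left, hDΦ_init]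
        exact ContinuousLinearMap.norm_id_le)
      (fun σ hσ => by
        rw [norm_neg]
        exact (ContinuousLinearMap.opNorm_comp_le _ _).trans
          (mul_le_mul_of_nonneg_right (hDN _ _) (norm_nonneg _)))
    simpa only [add_sub_cancel_right, one_mul] using h
  -- Second-derivative bounds, pointwise at vectors
  have hABnorm : ∀ τ p (y : EuclideanSpace ℝ (Fin d)) (v w : EuclideanSpace ℝ (Fin d)),
      ‖fderiv ℝ (N τ) p y + fderiv ℝ (fderiv ℝ (N τ)) p v w‖
        ≤ Λ₁ * ‖y‖ + Λ₂ * (‖v‖ * ‖w‖) := by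
    intro τ p y v w
    refine (norm_add_le _ _).trans (add_le_add ?_ ?_)
    · exact ((fderiv ℝ (N τ) p).le_opNorm y).trans
        (mul_le_mul_of_nonneg_right (hDN _ _) (norm_nonneg _))
    · calc ‖fderiv ℝ (fderiv ℝ (N τ)) p v w‖
          ≤ ‖fderiv ℝ (fderiv ℝ (N τ)) p v‖ * ‖w‖ := ContinuousLinearMap.le_opNorm _ _
        _ ≤ (‖fderiv ℝ (fderiv ℝ (N τ)) p‖ * ‖v‖) * ‖w‖ :=
            mul_le_mul_of_nonneg_right (ContinuousLinearMap.le_opNorm _ _) (norm_nonneg _)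
        _ ≤ (Λ₂ * ‖v‖) * ‖w‖ :=
            mul_le_mul_of_nonneg_right
              (mul_le_mul_of_nonneg_right (hD2N τ p) (norm_nonneg v)) (norm_nonneg w)
        _ = Λ₂ * (‖v‖ * ‖w‖) := by ring
  have hee : ∀ y : ℝ, Real.exp (Λ₁ * y) * Real.exp (Λ₁ * y) = Real.exp (2 * Λ₁ * y) := by
    intro y; rw [← Real.exp_add]; ring_nf
  have fwd2 : ∀ a ∈ Icc t₀ T, ∀ b ∈ Icc t₀ T, a ≤ b → ∀ x v w,
      ‖D2Φ a b x v w‖ ≤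
        (Λ₂ / Λ₁) * (Real.exp (2 * Λ₁ * (b - a)) - Real.exp (Λ₁ * (b - a))) * (‖v‖ * ‖w‖) := by
    intro a ha b hb hab x v w
    have h := gron2 (u := fun τ => D2Φ a τ x v w)
      (u' := fun τ => fderiv ℝ (N τ) (Φ a τ x) (D2Φ a τ x v w)
        + fderiv ℝ (fderiv ℝ (N τ)) (Φ a τ x) (DΦ a τ x v) (DΦ a τ x w))
      (c := Λ₂ * (‖v‖ * ‖w‖)) hΛ₁ hab
      (fun τ hτ => hD2Φ_ode a x τ ⟨ha.1.trans hτ.1, hτ.2.trans hb.2⟩ v w)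
      (by simp [hD2Φ_init])
      (fun τ hτ => by
        have hτT : τ ∈ Icc t₀ T := ⟨ha.1.trans hτ.1, hτ.2.trans hb.2⟩
        have hDv : ‖DΦ a τ x v‖ ≤ Real.exp (Λ₁ * (τ - a)) * ‖v‖ :=
          ((DΦ a τ x).le_opNorm v).trans
            (mul_le_mul_of_nonneg_right (fwd1 a ha τ hτT hτ.1 x) (norm_nonneg _))
        have hDw : ‖DΦ a τ x w‖ ≤ Real.exp (Λ₁ * (τ - a)) * ‖w‖ :=
          ((DΦ a τ x).le_opNorm w).trans
            (mul_le_mul_of_nonneg_right (fwd1 a ha τ hτT hτ.1 x) (norm_nonneg _))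
        refine (hABnorm τ _ _ _ _).trans (add_le_add_right ?_ _)
        have hprod : ‖DΦ a τ x v‖ * ‖DΦ a τ x w‖
            ≤ Real.exp (2 * Λ₁ * (τ - a)) * (‖v‖ * ‖w‖) := by
          calc ‖DΦ a τ x v‖ * ‖DΦ a τ x w‖
              ≤ (Real.exp (Λ₁ * (τ - a)) * ‖v‖) * (Real.exp (Λ₁ * (τ - a)) * ‖w‖) :=
                mul_le_mul hDv hDw (norm_nonneg _) (by positivity)
            _ = (Real.exp (Λ₁ * (τ - a)) * Real.exp (Λ₁ * (τ - a))) * (‖v‖ * ‖w‖) := by ring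
            _ = Real.exp (2 * Λ₁ * (τ - a)) * (‖v‖ * ‖w‖) := by rw [hee]
        calc Λ₂ * (‖DΦ a τ x v‖ * ‖DΦ a τ x w‖)
            ≤ Λ₂ * (Real.exp (2 * Λ₁ * (τ - a)) * (‖v‖ * ‖w‖)) :=
              mul_le_mul_of_nonneg_left hprod hΛ₂.le
          _ = Λ₂ * (‖v‖ * ‖w‖) * Real.exp (2 * Λ₁ * (τ - a)) := by ring)
    calc ‖D2Φ a b x v w‖ ≤ (Λ₂ * (‖v‖ * ‖w‖) / Λ₁) *
          (Real.exp (2 * Λ₁ * (b - a)) - Real.exp (Λ₁ * (b - a))) := h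
      _ = (Λ₂ / Λ₁) * (Real.exp (2 * Λ₁ * (b - a)) - Real.exp (Λ₁ * (b - a))) * (‖v‖ * ‖w‖) := by
          ring
  have bwd2 : ∀ a ∈ Icc t₀ T, ∀ b ∈ Icc t₀ T, a ≤ b → ∀ x v w,
      ‖D2Φ b a x v w‖ ≤
        (Λ₂ / Λ₁) * (Real.exp (2 * Λ₁ * (b - a)) - Real.exp (Λ₁ * (b - a))) * (‖v‖ * ‖w‖) := by
    intro a ha b hb hab x v w
    have hmem : ∀ σ ∈ Icc a b, a + b - σ ∈ Icc t₀ T := by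
      intro σ hσ
      constructor
      · linarith [ha.1, hσ.2]
      · linarith [hb.2, hσ.1]
    have hu : ∀ σ ∈ Icc a b, HasDerivAt (fun σ => D2Φ b (a + b - σ) x v w)
        ((-1 : ℝ) • (fderiv ℝ (N (a+b-σ)) (Φ b (a+b-σ) x) (D2Φ b (a+b-σ) x v w)
          + fderiv ℝ (fderiv ℝ (N (a+b-σ))) (Φ b (a+b-σ) x)
            (DΦ b (a+b-σ) x v) (DΦ b (a+b-σ) x w))) σ := by
      intro σ hσ
      have hinner : HasDerivAt (fun σ : ℝ => a + b - σ) (-1) σ := by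
        simpa using (hasDerivAt_id' σ).const_sub (a + b)
      exact (hD2Φ_ode b x (a + b - σ) (hmem σ hσ) v w).scomp σ hinner
    have h := gron2 (u := fun σ => D2Φ b (a + b - σ) x v w)
      (u' := fun σ => (-1 : ℝ) • (fderiv ℝ (N (a+b-σ)) (Φ b (a+b-σ) x) (D2Φ b (a+b-σ) x v w)
          + fderiv ℝ (fderiv ℝ (N (a+b-σ))) (Φ b (a+b-σ) x)
            (DΦ b (a+b-σ) x v) (DΦ b (a+b-σ) x w)))
      (c := Λ₂ * (‖v‖ * ‖w‖)) hΛ₁ hab hu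
      (by simp [hD2Φ_init])
      (fun σ hσ => by
        have hτT : a + b - σ ∈ Icc t₀ T := hmem σ hσ
        have hkey : ‖DΦ b (a + b - σ) x‖ ≤ Real.exp (Λ₁ * (σ - a)) := by
          have := bwd1 (a + b - σ) hτT b hb (by linarith [hσ.1]) x
          have heq : b - (a + b - σ) = σ - a := by ring
          rwa [heq] at this
        have hDv : ‖DΦ b (a+b-σ) x v‖ ≤ Real.exp (Λ₁ * (σ - a)) * ‖v‖ :=
          ((DΦ b (a+b-σ) x).le_opNorm v).trans
            (mul_le_mul_of_nonneg_right hkey (norm_nonneg _))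
        have hDw : ‖DΦ b (a+b-σ) x w‖ ≤ Real.exp (Λ₁ * (σ - a)) * ‖w‖ :=
          ((DΦ b (a+b-σ) x).le_opNorm w).trans
            (mul_le_mul_of_nonneg_right hkey (norm_nonneg _))
        simp only [neg_one_smul, norm_neg]
        refine (hABnorm _ _ _ _ _).trans (add_le_add_right ?_ _)
        have hprod : ‖DΦ b (a+b-σ) x v‖ * ‖DΦ b (a+b-σ) x w‖
            ≤ Real.exp (2 * Λ₁ * (σ - a)) * (‖v‖ * ‖w‖) := by
          calc ‖DΦ b (a+b-σ) x v‖ * ‖DΦ b (a+b-σ) x w‖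
              ≤ (Real.exp (Λ₁ * (σ - a)) * ‖v‖) * (Real.exp (Λ₁ * (σ - a)) * ‖w‖) :=
                mul_le_mul hDv hDw (norm_nonneg _) (by positivity)
            _ = (Real.exp (Λ₁ * (σ - a)) * Real.exp (Λ₁ * (σ - a))) * (‖v‖ * ‖w‖) := by ring
            _ = Real.exp (2 * Λ₁ * (σ - a)) * (‖v‖ * ‖w‖) := by rw [hee]
        calc Λ₂ * (‖DΦ b (a+b-σ) x v‖ * ‖DΦ b (a+b-σ) x w‖)
            ≤ Λ₂ * (Real.exp (2 * Λ₁ * (σ - a)) * (‖v‖ * ‖w‖)) :=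
              mul_le_mul_of_nonneg_left hprod hΛ₂.le
          _ = Λ₂ * (‖v‖ * ‖w‖) * Real.exp (2 * Λ₁ * (σ - a)) := by ring)
    have h' : ‖D2Φ b a x v w‖ ≤ (Λ₂ * (‖v‖ * ‖w‖) / Λ₁) *
        (Real.exp (2 * Λ₁ * (b - a)) - Real.exp (Λ₁ * (b - a))) := by
      simpa using h
    calc ‖D2Φ b a x v w‖ ≤ _ := h'
      _ = (Λ₂ / Λ₁) * (Real.exp (2 * Λ₁ * (b - a)) - Real.exp (Λ₁ * (b - a))) * (‖v‖ * ‖w‖) := by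
          ring
  -- conclude
  intro s hs t ht hst x
  have hC : 0 ≤ (Λ₂ / Λ₁) * (Real.exp (2 * Λ₁ * (t - s)) - Real.exp (Λ₁ * (t - s))) := by
    have : Real.exp (Λ₁ * (t - s)) ≤ Real.exp (2 * Λ₁ * (t - s)) := by
      apply Real.exp_le_exp.2
      nlinarith [hΛ₁.le, sub_nonneg.2 hst]
    have h1 : 0 ≤ Λ₂ / Λ₁ := by positivity
    nlinarith
  have hop : ∀ (M : EuclideanSpace ℝ (Fin d) →L[ℝ]
      (EuclideanSpace ℝ (Fin d) →L[ℝ] EuclideanSpace ℝ (Fin d))),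
      (∀ v w, ‖M v w‖ ≤ (Λ₂ / Λ₁) * (Real.exp (2 * Λ₁ * (t - s)) - Real.exp (Λ₁ * (t - s)))
        * (‖v‖ * ‖w‖)) →
      ‖M‖ ≤ (Λ₂ / Λ₁) * (Real.exp (2 * Λ₁ * (t - s)) - Real.exp (Λ₁ * (t - s))) := by
    intro M hM
    refine ContinuousLinearMap.opNorm_le_bound _ hC fun v => ?_
    refine ContinuousLinearMap.opNorm_le_bound _ (mul_nonneg hC (norm_nonneg v)) fun w => ?_
    calc ‖M v w‖ ≤ _ := hM v w
      _ = (Λ₂ / Λ₁) * (Real.exp (2 * Λ₁ * (t - s)) - Real.exp (Λ₁ * (t - s))) * ‖v‖ * ‖w‖ := by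
          ring
  exact ⟨fwd1 s hs t ht hst x, bwd1 s hs t ht hst x,
    hop _ (fun v w => fwd2 s hs t ht hst x v w),
    hop _ (fun v w => bwd2 s hs t ht hst x v w)⟩
end

section
/- Suppose d = k and there exists a nonzero nonnegative b ∈ L¹((t₀,T);ℝ) such that |B(t,x)ᵀ y| ≥ b(t)|y| for almost every t ∈ (t₀,T) and all (x,y) ∈ ℝ^d × ℝ^d. Then for each i ∈ {1,2} the Gramian is uniformly coercive: yᵀ 𝒩ᵢ(u) y ≥ (e^{−2Λ₁Δt₀} ‖b‖₁² / Δt₀) |y|² for every y ∈ ℝ^d, every x⁰ ∈ ℝ^d and every u ∈ L^∞((t₀,T);ℝ^k). Hence, with Cᵢ := Δt₀ e^{2Λ₁Δt₀} ‖b‖₁⁻², one has ℱ(Cᵢ) = L^∞((t₀,T);ℝ^k). -/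
open Set intervalIntegral MeasureTheory Filter
open scoped RealInnerProductSpace
open scoped Topology

/-- `K_u(t) := DΦ_{t,τ}(x_u(t)) B(t, x_u(t))`. -/
noncomputable def Kker {d k : ℕ} (τ : ℝ)
    (DΦ : ℝ → ℝ → EuclideanSpace ℝ (Fin d) →
      (EuclideanSpace ℝ (Fin d) →L[ℝ] EuclideanSpace ℝ (Fin d)))
    (Bm : ℝ → EuclideanSpace ℝ (Fin d) →
      (EuclideanSpace ℝ (Fin k) →L[ℝ] EuclideanSpace ℝ (Fin d)))
    (x : ℝ → EuclideanSpace ℝ (Fin d)) (t : ℝ) :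
    EuclideanSpace ℝ (Fin k) →L[ℝ] EuclideanSpace ℝ (Fin d) :=
  (DΦ t τ (x t)).comp (Bm t (x t))

/-- The trajectory-dependent controllability Gramian
`𝒩 = ∫_{t₀}^T DΦ_{t,τ}(x_u(t)) B B^⊤ DΦ_{t,τ}(x_u(t))^⊤ dt`. -/
noncomputable def gram {d k : ℕ} (t₀ T τ : ℝ)
    (DΦ : ℝ → ℝ → EuclideanSpace ℝ (Fin d) →
      (EuclideanSpace ℝ (Fin d) →L[ℝ] EuclideanSpace ℝ (Fin d)))
    (Bm : ℝ → EuclideanSpace ℝ (Fin d) →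
      (EuclideanSpace ℝ (Fin k) →L[ℝ] EuclideanSpace ℝ (Fin d)))
    (x : ℝ → EuclideanSpace ℝ (Fin d)) :
    EuclideanSpace ℝ (Fin d) →L[ℝ] EuclideanSpace ℝ (Fin d) :=
  ∫ t in t₀..T,
    (Kker τ DΦ Bm x t).comp (ContinuousLinearMap.adjoint (Kker τ DΦ Bm x t))

/-- The map `L_{u,τ} v = ∫_{t₀}^T DΦ_{t,τ}(x_u(t)) B(t,x_u(t)) v(t) dt`. -/
noncomputable def Lmap {d k : ℕ} (t₀ T τ : ℝ)
    (DΦ : ℝ → ℝ → EuclideanSpace ℝ (Fin d) →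
      (EuclideanSpace ℝ (Fin d) →L[ℝ] EuclideanSpace ℝ (Fin d)))
    (Bm : ℝ → EuclideanSpace ℝ (Fin d) →
      (EuclideanSpace ℝ (Fin k) →L[ℝ] EuclideanSpace ℝ (Fin d)))
    (x : ℝ → EuclideanSpace ℝ (Fin d))
    (w : ℝ → EuclideanSpace ℝ (Fin k)) : EuclideanSpace ℝ (Fin d) :=
  ∫ t in t₀..T, (Kker τ DΦ Bm x t) (w t)

/-- The smallest eigenvalue of a symmetric operator, as the infimum of its Rayleigh
quotient over the unit sphere. -/
noncomputable def lambdaMin {d : ℕ}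
    (M : EuclideanSpace ℝ (Fin d) →L[ℝ] EuclideanSpace ℝ (Fin d)) : ℝ :=
  ⨅ x : Metric.sphere (0 : EuclideanSpace ℝ (Fin d)) 1,
    ⟪(x : EuclideanSpace ℝ (Fin d)), M x⟫

/-- The supremum of a real-valued function over `[t₀, T]` (the `L^∞((t₀,T))`-norm for
continuous representatives). -/
noncomputable def supIcc (t₀ T : ℝ) (f : ℝ → ℝ) : ℝ := sSup (f '' Icc t₀ T)

/-- A control is admissible when it is measurable and bounded on `[t₀, T]`
(i.e. belongs to `L^∞((t₀,T);ℝ^k)`). -/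
def Adm {k : ℕ} (t₀ T : ℝ) (u : ℝ → EuclideanSpace ℝ (Fin k)) : Prop :=
  Measurable u ∧ ∃ M : ℝ, ∀ t ∈ Icc t₀ T, ‖u t‖ ≤ M

/-- The feasible coercivity class `ℱ(C) = {u ∈ L^∞ : λ_min(𝒩(u)) ≥ C⁻¹}`. -/
def Fcl {d k : ℕ} (t₀ T τ C : ℝ)
    (DΦ : ℝ → ℝ → EuclideanSpace ℝ (Fin d) →
      (EuclideanSpace ℝ (Fin d) →L[ℝ] EuclideanSpace ℝ (Fin d)))
    (Bm : ℝ → EuclideanSpace ℝ (Fin d) →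
      (EuclideanSpace ℝ (Fin k) →L[ℝ] EuclideanSpace ℝ (Fin d)))
    (xSol : (ℝ → EuclideanSpace ℝ (Fin k)) → ℝ → EuclideanSpace ℝ (Fin d)) :
    Set (ℝ → EuclideanSpace ℝ (Fin k)) :=
  {u | Adm t₀ T u ∧ C⁻¹ ≤ lambdaMin (gram t₀ T τ DΦ Bm (xSol u))}

/-- The feasibility ball `ℱ(y) = {u ∈ ℱ(C) : ‖u‖_∞ ≤ ζ}` with
`ζ = C ‖B‖_∞ e^{Λ₁(T−t₀)} |y|`. -/
def Fball {d k : ℕ} (t₀ T τ C Λ₁ Bsup : ℝ)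
    (DΦ : ℝ → ℝ → EuclideanSpace ℝ (Fin d) →
      (EuclideanSpace ℝ (Fin d) →L[ℝ] EuclideanSpace ℝ (Fin d)))
    (Bm : ℝ → EuclideanSpace ℝ (Fin d) →
      (EuclideanSpace ℝ (Fin k) →L[ℝ] EuclideanSpace ℝ (Fin d)))
    (xSol : (ℝ → EuclideanSpace ℝ (Fin k)) → ℝ → EuclideanSpace ℝ (Fin d))
    (y : EuclideanSpace ℝ (Fin d)) :
    Set (ℝ → EuclideanSpace ℝ (Fin k)) :=
  {u | u ∈ Fcl t₀ T τ C DΦ Bm xSol ∧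
    ∀ t ∈ Icc t₀ T, ‖u t‖ ≤ C * Bsup * Real.exp (Λ₁ * (T - t₀)) * ‖y‖}

/-- The synthesis map `𝒮(u)(t) = B(t,x_u(t))^⊤ DΦ_{t,τ}(x_u(t))^⊤ 𝒩(u)⁻¹ y`. -/
noncomputable def Smap {d k : ℕ} (t₀ T τ : ℝ)
    (DΦ : ℝ → ℝ → EuclideanSpace ℝ (Fin d) →
      (EuclideanSpace ℝ (Fin d) →L[ℝ] EuclideanSpace ℝ (Fin d)))
    (Bm : ℝ → EuclideanSpace ℝ (Fin d) →
      (EuclideanSpace ℝ (Fin k) →L[ℝ] EuclideanSpace ℝ (Fin d)))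
    (xSol : (ℝ → EuclideanSpace ℝ (Fin k)) → ℝ → EuclideanSpace ℝ (Fin d))
    (y : EuclideanSpace ℝ (Fin d))
    (u : ℝ → EuclideanSpace ℝ (Fin k)) : ℝ → EuclideanSpace ℝ (Fin k) :=
  fun t => ContinuousLinearMap.adjoint (Kker τ DΦ Bm (xSol u) t)
    ((gram t₀ T τ DΦ Bm (xSol u)).inverse y)


section auxGron
variable {E : Type*} [NormedAddCommGroup E] [NormedSpace ℝ E]

/-- A two-sided Grönwall inequality on an interval, for a function with a derivative
everywhere on `Icc a b`, starting from an arbitrary base point `s ∈ Icc a b`. -/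
theorem gron_two {f f' : ℝ → E} {a b s r K ε δ : ℝ}
    (hs : s ∈ Icc a b) (hr : r ∈ Icc a b)
    (hderiv : ∀ t ∈ Icc a b, HasDerivAt f (f' t) t)
    (hbound : ∀ t ∈ Icc a b, ‖f' t‖ ≤ K * ‖f t‖ + ε)
    (hδ : ‖f s‖ ≤ δ) :
    ‖f r‖ ≤ gronwallBound δ K ε |r - s| := by
  rcases le_total s r with h | h
  · rw [abs_of_nonneg (by linarith)]
    have hsub : Icc s r ⊆ Icc a b := Icc_subset_Icc hs.1 hr.2
    exact norm_le_gronwallBound_of_norm_deriv_right_le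
      (fun t ht => (hderiv t (hsub ht)).continuousAt.continuousWithinAt)
      (fun t ht => (hderiv t (hsub (Ico_subset_Icc_self ht))).hasDerivWithinAt)
      hδ (fun t ht => hbound t (hsub (Ico_subset_Icc_self ht))) r (right_mem_Icc.2 h)
  · rw [abs_of_nonpos (by linarith), neg_sub]
    have hsub : Icc r s ⊆ Icc a b := Icc_subset_Icc hr.1 hs.2
    have hmem : ∀ t ∈ Icc r s, s + r - t ∈ Icc a b := by
      intro t ht
      exact hsub ⟨by linarith [ht.2], by linarith [ht.1]⟩
    have hgd : ∀ t ∈ Icc r s, HasDerivAt (fun t' => f (s + r - t')) (-f' (s + r - t)) t := by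
      intro t ht
      have h1 : HasDerivAt (fun t' : ℝ => s + r - t') (-1) t := by
        simpa using (hasDerivAt_id t).const_sub (s + r)
      have := (hderiv _ (hmem t ht)).scomp t h1
      simpa [Function.comp_def] using this
    have key := norm_le_gronwallBound_of_norm_deriv_right_le
      (f := fun t' => f (s + r - t')) (f' := fun t' => -f' (s + r - t'))
      (fun t ht => (hgd t ht).continuousAt.continuousWithinAt)
      (fun t ht => (hgd t (Ico_subset_Icc_self ht)).hasDerivWithinAt)
      (by simpa using hδ)
      (fun t ht => by simpa using hbound _ (hmem t (Ico_subset_Icc_self ht)))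
      s (right_mem_Icc.2 h)
    simpa using key

end auxGron

set_option maxHeartbeats 1000000 in
/-- In the fully actuated case `k = d`, if `|B(t,x)^⊤ y| ≥ b(t)|y|` for
a.e. `t` and all `x, y`, with `0 ≤ b ∈ L¹` nonzero, then the Gramian is uniformly
coercive: `yᵀ𝒩ᵢ(u)y ≥ (e^{−2Λ₁Δt₀}‖b‖₁²/Δt₀)|y|²` for all `y`, all initial states and all
bounded controls; hence with `Cᵢ = Δt₀ e^{2Λ₁Δt₀}‖b‖₁⁻²` one has
`ℱ(Cᵢ) = L^∞((t₀,T);ℝ^k)`. -/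
theorem stmt11
    (d : ℕ) (hd : 0 < d) (t₀ T Λ₁ Λ₂ L_B Bsup : ℝ) (ht : t₀ < T)
    (hΛ₁ : 0 < Λ₁) (hΛ₂ : 0 < Λ₂)
    (N : ℝ → EuclideanSpace ℝ (Fin d) → EuclideanSpace ℝ (Fin d))
    (hNmeas : ∀ x, Measurable fun t => N t x)
    (hNbdd : ∀ x, ∃ M : ℝ, ∀ t ∈ Icc t₀ T, ‖N t x‖ ≤ M)
    (hNC2 : ∀ t, ContDiff ℝ 2 (N t))
    (hDN : ∀ t w, ‖fderiv ℝ (N t) w‖ ≤ Λ₁)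
    (hD2N : ∀ t w, ‖fderiv ℝ (fderiv ℝ (N t)) w‖ ≤ Λ₂)
    (Φ : ℝ → ℝ → EuclideanSpace ℝ (Fin d) → EuclideanSpace ℝ (Fin d))
    (DΦ : ℝ → ℝ → EuclideanSpace ℝ (Fin d) →
      (EuclideanSpace ℝ (Fin d) →L[ℝ] EuclideanSpace ℝ (Fin d)))
    (hflow_init : ∀ s x, Φ s s x = x)
    (hflow_ode : ∀ s x, ∀ t ∈ Icc t₀ T, HasDerivAt (fun τ' => Φ s τ' x) (N t (Φ s t x)) t)
    (hgroup : ∀ t₁ t₂ t₃ : ℝ, ∀ x, Φ t₂ t₃ (Φ t₁ t₂ x) = Φ t₁ t₃ x)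
    (hΦC1 : ∀ s t : ℝ, ContDiff ℝ 1 (Φ s t))
    (hDΦ_fderiv : ∀ s t x, DΦ s t x = fderiv ℝ (Φ s t) x)
    (hDΦ_init : ∀ s x, DΦ s s x = ContinuousLinearMap.id ℝ (EuclideanSpace ℝ (Fin d)))
    (hDΦ_ode : ∀ s x, ∀ t ∈ Icc t₀ T,
      HasDerivAt (fun τ' => DΦ s τ' x) ((fderiv ℝ (N t) (Φ s t x)).comp (DΦ s t x)) t)
    -- the input matrix, with k = d
    (Bm : ℝ → EuclideanSpace ℝ (Fin d) →
      (EuclideanSpace ℝ (Fin d) →L[ℝ] EuclideanSpace ℝ (Fin d)))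
    (hBmeas : ∀ x, Measurable fun t => Bm t x)
    (hBsup : ∀ t ∈ Icc t₀ T, ∀ x, ‖Bm t x‖ ≤ Bsup)
    (hBC1 : ∀ t, ContDiff ℝ 1 (Bm t))
    (hDB : ∀ t w, ‖fderiv ℝ (Bm t) w‖ ≤ L_B)
    -- the solution map, for every initial state and bounded control
    (xSol : EuclideanSpace ℝ (Fin d) → (ℝ → EuclideanSpace ℝ (Fin d)) →
      ℝ → EuclideanSpace ℝ (Fin d))
    (hxSol : ∀ x0 u, Adm t₀ T u →
      ContinuousOn (xSol x0 u) (Icc t₀ T) ∧ xSol x0 u t₀ = x0 ∧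
      ∀ t ∈ Icc t₀ T, xSol x0 u t
        = x0 + ∫ s in t₀..t, (N s (xSol x0 u s) + Bm s (xSol x0 u s) (u s)))
    -- the structural nondegeneracy assumption on B
    (b : ℝ → ℝ) (hbnn : ∀ t, 0 ≤ b t)
    (hbint : IntervalIntegrable b MeasureTheory.volume t₀ T)
    (hbne : ¬ (b =ᵐ[MeasureTheory.volume.restrict (Ioc t₀ T)] 0))
    (hBcoer : ∀ᵐ t ∂(MeasureTheory.volume.restrict (Ioc t₀ T)),
      ∀ x y : EuclideanSpace ℝ (Fin d),
        b t * ‖y‖ ≤ ‖ContinuousLinearMap.adjoint (Bm t x) y‖) :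
    ∀ τ : ℝ, (τ = t₀ ∨ τ = T) →
      ∀ (x0 : EuclideanSpace ℝ (Fin d)) (u : ℝ → EuclideanSpace ℝ (Fin d)), Adm t₀ T u →
        (∀ y : EuclideanSpace ℝ (Fin d),
          Real.exp (-2 * Λ₁ * (T - t₀)) * (∫ t in t₀..T, b t) ^ 2 / (T - t₀) * ‖y‖ ^ 2
            ≤ ⟪y, gram t₀ T τ DΦ Bm (xSol x0 u) y⟫) ∧
        ((T - t₀) * Real.exp (2 * Λ₁ * (T - t₀)) * ((∫ t in t₀..T, b t) ^ 2)⁻¹)⁻¹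
          ≤ lambdaMin (gram t₀ T τ DΦ Bm (xSol x0 u)) ∧
        Fcl t₀ T τ ((T - t₀) * Real.exp (2 * Λ₁ * (T - t₀)) * ((∫ t in t₀..T, b t) ^ 2)⁻¹)
            DΦ Bm (xSol x0) = {u | Adm t₀ T u} := by

  intro τ hτ
  have hΔ : (0:ℝ) < T - t₀ := sub_pos.2 ht
  have hτI : τ ∈ Icc t₀ T := by
    rcases hτ with h | h <;> simp [h, le_of_lt ht]
  set eΔ := Real.exp (Λ₁ * (T - t₀)) with heΔ
  have heΔpos : (0:ℝ) < eΔ := Real.exp_pos _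
  -- Step 1 : uniform norm bound for DΦ
  have hDΦ_norm : ∀ s ∈ Icc t₀ T, ∀ r ∈ Icc t₀ T, ∀ z : EuclideanSpace ℝ (Fin d),
      ‖DΦ s r z‖ ≤ eΔ := by
    intro s hs r hr z
    have h2 : ∀ t ∈ Icc t₀ T,
        ‖(fderiv ℝ (N t) (Φ s t z)).comp (DΦ s t z)‖ ≤ Λ₁ * ‖DΦ s t z‖ + 0 := by
      intro t ht
      rw [add_zero]
      exact (ContinuousLinearMap.opNorm_comp_le _ _).trans
        (mul_le_mul_of_nonneg_right (hDN t _) (norm_nonneg _))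
    have h3 : ‖DΦ s s z‖ ≤ 1 := by
      rw [hDΦ_init]
      exact ContinuousLinearMap.norm_id_le
    have hg := gron_two hs hr (hDΦ_ode s z) h2 h3
    rw [gronwallBound_ε0, one_mul] at hg
    refine hg.trans (Real.exp_le_exp.2 ?_)
    have habs : |r - s| ≤ T - t₀ := by
      rw [abs_le]
      constructor <;> [linarith [hs.1, hs.2, hr.1, hr.2]; linarith [hs.1, hs.2, hr.1, hr.2]]
    exact mul_le_mul_of_nonneg_left habs hΛ₁.le
  -- Step 2 : Lipschitz bound for the flow
  have hΦ_lip : ∀ s ∈ Icc t₀ T, ∀ r ∈ Icc t₀ T, ∀ z z' : EuclideanSpace ℝ (Fin d),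
      ‖Φ s r z - Φ s r z'‖ ≤ eΔ * ‖z - z'‖ := by
    intro s hs r hr z z'
    exact convex_univ.norm_image_sub_le_of_norm_fderiv_le
      (fun w _ => ((hΦC1 s r).differentiable one_ne_zero).differentiableAt)
      (fun w _ => by rw [← hDΦ_fderiv]; exact hDΦ_norm s hs r hr w) (mem_univ z') (mem_univ z)
  -- Step 3 : Lipschitz bound for fderiv N
  have hN_lip : ∀ (t : ℝ) (z z' : EuclideanSpace ℝ (Fin d)),
      ‖fderiv ℝ (N t) z - fderiv ℝ (N t) z'‖ ≤ Λ₂ * ‖z - z'‖ := by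
    intro t z z'
    exact convex_univ.norm_image_sub_le_of_norm_fderiv_le
      (fun w _ => (((hNC2 t).fderiv_right (m := 1) (by norm_num)).differentiable
        one_ne_zero).differentiableAt)
      (fun w _ => hD2N t w) (mem_univ z') (mem_univ z)
  -- Step 4 : Lipschitz bound for DΦ in the space variable
  obtain ⟨LD, hLDnn, hDΦ_lip⟩ : ∃ LD : ℝ, 0 ≤ LD ∧ ∀ s ∈ Icc t₀ T, ∀ r ∈ Icc t₀ T,
      ∀ z z' : EuclideanSpace ℝ (Fin d), ‖DΦ s r z - DΦ s r z'‖ ≤ LD * ‖z - z'‖ := by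
    refine ⟨Λ₂ * eΔ * eΔ / Λ₁ * eΔ, by positivity, ?_⟩
    intro s hs r hr z z'
    set ε := Λ₂ * eΔ * eΔ * ‖z - z'‖ with hε
    have hεnn : 0 ≤ ε := by positivity
    have h1 : ∀ t ∈ Icc t₀ T, HasDerivAt (fun τ' => DΦ s τ' z - DΦ s τ' z')
        ((fderiv ℝ (N t) (Φ s t z)).comp (DΦ s t z)
          - (fderiv ℝ (N t) (Φ s t z')).comp (DΦ s t z')) t :=
      fun t ht => (hDΦ_ode s z t ht).sub (hDΦ_ode s z' t ht)
    have h2 : ∀ t ∈ Icc t₀ T,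
        ‖(fderiv ℝ (N t) (Φ s t z)).comp (DΦ s t z)
          - (fderiv ℝ (N t) (Φ s t z')).comp (DΦ s t z')‖
          ≤ Λ₁ * ‖DΦ s t z - DΦ s t z'‖ + ε := by
      intro t ht
      have key : (fderiv ℝ (N t) (Φ s t z)).comp (DΦ s t z)
          - (fderiv ℝ (N t) (Φ s t z')).comp (DΦ s t z')
          = (fderiv ℝ (N t) (Φ s t z)).comp (DΦ s t z - DΦ s t z')
            + (fderiv ℝ (N t) (Φ s t z) - fderiv ℝ (N t) (Φ s t z')).comp (DΦ s t z') := by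
        refine ContinuousLinearMap.ext fun v => ?_
        simp only [ContinuousLinearMap.coe_comp', Function.comp_apply,
          ContinuousLinearMap.add_apply, ContinuousLinearMap.sub_apply, map_sub]
        abel
      rw [key]
      refine (norm_add_le _ _).trans (add_le_add ?_ ?_)
      · exact (ContinuousLinearMap.opNorm_comp_le _ _).trans
          (mul_le_mul_of_nonneg_right (hDN t _) (norm_nonneg _))
      · refine (ContinuousLinearMap.opNorm_comp_le _ _).trans ?_
        have ha := hN_lip t (Φ s t z) (Φ s t z')
        have hb := hΦ_lip s hs t ht z z'
        have hc := hDΦ_norm s hs t ht z'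
        have ha' : ‖fderiv ℝ (N t) (Φ s t z) - fderiv ℝ (N t) (Φ s t z')‖
            ≤ Λ₂ * (eΔ * ‖z - z'‖) := by nlinarith [norm_nonneg (Φ s t z - Φ s t z'), hΛ₂.le]
        calc ‖fderiv ℝ (N t) (Φ s t z) - fderiv ℝ (N t) (Φ s t z')‖ * ‖DΦ s t z'‖
            ≤ (Λ₂ * (eΔ * ‖z - z'‖)) * eΔ := by
              exact mul_le_mul ha' hc (norm_nonneg _)
                (mul_nonneg hΛ₂.le (mul_nonneg heΔpos.le (norm_nonneg _)))
          _ = ε := by rw [hε]; ring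
    have h3 : ‖DΦ s s z - DΦ s s z'‖ ≤ 0 := by
      rw [hDΦ_init, hDΦ_init, sub_self, norm_zero]
    have hg := gron_two hs hr h1 h2 h3
    rw [gronwallBound_of_K_ne_0 (ne_of_gt hΛ₁)] at hg
    have habs : Real.exp (Λ₁ * |r - s|) ≤ eΔ := by
      rw [heΔ]
      apply Real.exp_le_exp.2
      apply mul_le_mul_of_nonneg_left _ hΛ₁.le
      rw [abs_le]
      constructor <;> [linarith [hs.1, hs.2, hr.1, hr.2]; linarith [hs.1, hs.2, hr.1, hr.2]]
    have hdiv : 0 ≤ ε / Λ₁ := by positivity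
    calc ‖DΦ s r z - DΦ s r z'‖
        ≤ 0 * Real.exp (Λ₁ * |r - s|) + ε / Λ₁ * (Real.exp (Λ₁ * |r - s|) - 1) := hg
      _ = ε / Λ₁ * (Real.exp (Λ₁ * |r - s|) - 1) := by ring
      _ ≤ ε / Λ₁ * eΔ := by nlinarith
      _ = Λ₂ * eΔ * eΔ / Λ₁ * eΔ * ‖z - z'‖ := by rw [hε]; ring
  -- Step 5 : inverse identities for DΦ from the group law
  have hcomp_id : ∀ (s r : ℝ) (z : EuclideanSpace ℝ (Fin d)),
      (DΦ r s (Φ s r z)).comp (DΦ s r z)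
        = ContinuousLinearMap.id ℝ (EuclideanSpace ℝ (Fin d)) := by
    intro s r z
    have hfun : (Φ r s ∘ Φ s r) = id := by
      funext w
      show Φ r s (Φ s r w) = w
      rw [hgroup s r s w, hflow_init]
    have hd1 : DifferentiableAt ℝ (Φ r s) (Φ s r z) :=
      ((hΦC1 r s).differentiable one_ne_zero).differentiableAt
    have hd2 : DifferentiableAt ℝ (Φ s r) z :=
      ((hΦC1 s r).differentiable one_ne_zero).differentiableAt
    have hcr := fderiv_comp z hd1 hd2
    rw [hDΦ_fderiv, hDΦ_fderiv, ← hcr, hfun, fderiv_id]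
  -- uncurried measurability of B
  have hBusm : StronglyMeasurable
      (Function.uncurry (fun (z : EuclideanSpace ℝ (Fin d)) (t : ℝ) => Bm t z)) :=
    stronglyMeasurable_uncurry_of_continuous_of_stronglyMeasurable
      (fun t => (hBC1 t).continuous) (fun z => (hBmeas z).stronglyMeasurable)
  set μ := MeasureTheory.volume.restrict (Ioc t₀ T) with hμ
  haveI hμfin : IsFiniteMeasure μ := by
    constructor
    rw [hμ, Measure.restrict_apply_univ]
    simp [Real.volume_Ioc]
  -- the interval integral of b as a μ-integral
  have hbeq : (∫ t in t₀..T, b t) = ∫ t, b t ∂μ := intervalIntegral.integral_of_le ht.le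
  have hb_int : Integrable b μ := hbint.1
  have hbBsup : ∀ᵐ t ∂μ, b t ≤ Bsup := by
    filter_upwards [hBcoer, ae_restrict_mem measurableSet_Ioc] with t hB htm
    set y0 : EuclideanSpace ℝ (Fin d) := EuclideanSpace.single (⟨0, hd⟩ : Fin d) (1:ℝ) with hy0def
    have hy0 : ‖y0‖ = 1 := by
      rw [hy0def, EuclideanSpace.norm_single, norm_one]
    have h1 := hB 0 y0
    rw [hy0, mul_one] at h1
    have h2 : ‖ContinuousLinearMap.adjoint (Bm t 0) y0‖ ≤ ‖Bm t 0‖ := by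
      calc ‖ContinuousLinearMap.adjoint (Bm t 0) y0‖
          ≤ ‖ContinuousLinearMap.adjoint (Bm t 0)‖ * ‖y0‖ := ContinuousLinearMap.le_opNorm _ _
        _ = ‖Bm t 0‖ := by
            rw [hy0, mul_one]
            exact (ContinuousLinearMap.adjoint (𝕜 := ℝ)).norm_map (Bm t 0)
    have h3 := hBsup t (Ioc_subset_Icc_self htm) 0
    linarith
  have hBsup0 : 0 ≤ Bsup :=
    le_trans (norm_nonneg _) (hBsup t₀ (left_mem_Icc.2 ht.le) 0)
  have hb2_int : Integrable (fun t => (b t)^2) μ := by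
    refine Integrable.mono' (hb_int.const_mul Bsup) ?_ ?_
    · exact (hb_int.aestronglyMeasurable.mul hb_int.aestronglyMeasurable).congr
        (Eventually.of_forall fun t => (sq (b t)).symm)
    · filter_upwards [hbBsup] with t h
      rw [Real.norm_eq_abs, abs_of_nonneg (sq_nonneg _)]
      nlinarith [hbnn t]
  have hCS : (∫ t, b t ∂μ)^2 ≤ (T - t₀) * ∫ t, (b t)^2 ∂μ := by
    set Ib := ∫ t, b t ∂μ with hI
    set A := T - t₀ with hA
    have hμuniv : (μ univ).toReal = A := by
      rw [hμ, Measure.restrict_apply_univ]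
      simp [Real.volume_Ioc, ENNReal.toReal_ofReal hΔ.le]
      exact ENNReal.toReal_ofReal hΔ.le
    have h0 : (0:ℝ) ≤ ∫ t, (A * b t - Ib)^2 ∂μ := integral_nonneg fun t => sq_nonneg _
    have hfun : (fun t => (A * b t - Ib)^2)
        = fun t => A^2 * (b t)^2 - (2 * A * Ib) * b t + Ib^2 := by
      funext t; ring
    have hint1 : Integrable (fun t => A^2 * (b t)^2 - (2 * A * Ib) * b t) μ :=
      (hb2_int.const_mul _).sub (hb_int.const_mul _)
    have hexp : ∫ t, (A * b t - Ib)^2 ∂μ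
        = A^2 * (∫ t, (b t)^2 ∂μ) - (2 * A * Ib) * Ib + Ib^2 * A := by
      rw [hfun, integral_add hint1 (integrable_const _),
        integral_sub (hb2_int.const_mul _) (hb_int.const_mul _),
        MeasureTheory.integral_const_mul, MeasureTheory.integral_const_mul, MeasureTheory.integral_const, Measure.real, hμuniv]
      rw [smul_eq_mul]
      ring
    rw [hexp] at h0
    nlinarith
  -- the main coercivity estimate
  have main : ∀ (x0 : EuclideanSpace ℝ (Fin d)) (u : ℝ → EuclideanSpace ℝ (Fin d)),
      Adm t₀ T u → ∀ y : EuclideanSpace ℝ (Fin d),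
      Real.exp (-2 * Λ₁ * (T - t₀)) * (∫ t in t₀..T, b t) ^ 2 / (T - t₀) * ‖y‖ ^ 2
        ≤ ⟪y, gram t₀ T τ DΦ Bm (xSol x0 u) y⟫ := by
    intro x0 u hu y
    obtain ⟨hxcont, hx0val, -⟩ := hxSol x0 u hu
    set x : ℝ → EuclideanSpace ℝ (Fin d) := xSol x0 u with hxdef
    set F : ℝ → (EuclideanSpace ℝ (Fin d) →L[ℝ] EuclideanSpace ℝ (Fin d)) :=
      fun t => DΦ t τ (x t) with hFdef
    set Q : ℝ → (EuclideanSpace ℝ (Fin d) →L[ℝ] EuclideanSpace ℝ (Fin d)) :=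
      fun t => DΦ τ t (Φ t τ (x t)) with hQdef
    have hQF : ∀ t, (Q t).comp (F t) = ContinuousLinearMap.id ℝ _ :=
      fun t => hcomp_id t τ (x t)
    have hFQ : ∀ t, (F t).comp (Q t) = ContinuousLinearMap.id ℝ _ := by
      intro t
      have h := hcomp_id τ t (Φ t τ (x t))
      rwa [hgroup t τ t, hflow_init] at h
    have hmul1 : ∀ t, Q t * F t = 1 := by
      intro t
      rw [ContinuousLinearMap.mul_def, hQF t]
      exact ContinuousLinearMap.one_def.symm
    have hmul2 : ∀ t, F t * Q t = 1 := by
      intro t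
      rw [ContinuousLinearMap.mul_def, hFQ t]
      exact ContinuousLinearMap.one_def.symm
    have hFinv : ∀ t, F t = Ring.inverse (Q t) :=
      fun t => (Ring.inverse_unit ⟨Q t, F t, hmul1 t, hmul2 t⟩).symm
    -- continuity of the transported trajectory
    have hxt_cont : ContinuousOn (fun t => Φ t τ (x t)) (Icc t₀ T) := by
      intro t htI
      have hg : ContinuousWithinAt (fun t' => Φ t t' (x t)) (Icc t₀ T) t :=
        (hflow_ode t (x t) t htI).continuousAt.continuousWithinAt
      have hx' : ContinuousWithinAt x (Icc t₀ T) t := hxcont t htI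
      rw [ContinuousWithinAt, tendsto_iff_norm_sub_tendsto_zero]
      have hb1 : Tendsto (fun t' => ‖x t' - x t‖) (𝓝[Icc t₀ T] t) (𝓝 0) := by
        have h2 : Tendsto (fun t' => ‖x t' - x t‖) (𝓝[Icc t₀ T] t) (𝓝 (‖x t - x t‖)) :=
          (hx'.sub (continuousWithinAt_const (b := x t))).norm
        have h3 : ‖x t - x t‖ = (0:ℝ) := by rw [sub_self, norm_zero]
        rw [← h3]
        exact h2
      have hb2 : Tendsto (fun t' => ‖x t - Φ t t' (x t)‖) (𝓝[Icc t₀ T] t) (𝓝 0) := by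
        have h2 : Tendsto (fun t' => ‖x t - Φ t t' (x t)‖) (𝓝[Icc t₀ T] t)
            (𝓝 (‖x t - Φ t t (x t)‖)) :=
          ((continuousWithinAt_const (b := x t)).sub hg).norm
        have h3 : ‖x t - Φ t t (x t)‖ = (0:ℝ) := by rw [hflow_init, sub_self, norm_zero]
        rw [← h3]
        exact h2
      have hb : Tendsto (fun t' => eΔ * (‖x t' - x t‖ + ‖x t - Φ t t' (x t)‖))
          (𝓝[Icc t₀ T] t) (𝓝 0) := by
        have h00 : eΔ * (0 + 0) = (0:ℝ) := by ring
        rw [← h00]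
        exact ((hb1.add hb2)).const_mul eΔ
      refine squeeze_zero' (Eventually.of_forall fun t' => norm_nonneg _) ?_ hb
      filter_upwards [eventually_mem_nhdsWithin] with t' ht'
      have hgrp : Φ t τ (x t) = Φ t' τ (Φ t t' (x t)) := (hgroup t t' τ (x t)).symm
      rw [hgrp]
      calc ‖Φ t' τ (x t') - Φ t' τ (Φ t t' (x t))‖
          ≤ eΔ * ‖x t' - Φ t t' (x t)‖ := hΦ_lip t' ht' τ hτI _ _
        _ ≤ eΔ * (‖x t' - x t‖ + ‖x t - Φ t t' (x t)‖) :=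
            mul_le_mul_of_nonneg_left
              (norm_sub_le_norm_sub_add_norm_sub _ _ _) heΔpos.le
    have hQ_cont : ContinuousOn Q (Icc t₀ T) := by
      intro t htI
      have hH : ContinuousWithinAt (fun t' => DΦ τ t' (Φ t τ (x t))) (Icc t₀ T) t :=
        (hDΦ_ode τ (Φ t τ (x t)) t htI).continuousAt.continuousWithinAt
      have hxt : ContinuousWithinAt (fun t' => Φ t' τ (x t')) (Icc t₀ T) t := hxt_cont t htI
      rw [ContinuousWithinAt, tendsto_iff_norm_sub_tendsto_zero]
      have hb1 : Tendsto (fun t' => ‖Φ t' τ (x t') - Φ t τ (x t)‖) (𝓝[Icc t₀ T] t) (𝓝 0) := by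
        have h2 : Tendsto (fun t' => ‖Φ t' τ (x t') - Φ t τ (x t)‖) (𝓝[Icc t₀ T] t)
            (𝓝 (‖Φ t τ (x t) - Φ t τ (x t)‖)) :=
          (hxt.sub (continuousWithinAt_const (b := Φ t τ (x t)))).norm
        have h3 : ‖Φ t τ (x t) - Φ t τ (x t)‖ = (0:ℝ) := by rw [sub_self, norm_zero]
        rw [← h3]
        exact h2
      have hb2 : Tendsto (fun t' => ‖DΦ τ t' (Φ t τ (x t)) - DΦ τ t (Φ t τ (x t))‖)
          (𝓝[Icc t₀ T] t) (𝓝 0) := by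
        have h2 : Tendsto (fun t' => ‖DΦ τ t' (Φ t τ (x t)) - DΦ τ t (Φ t τ (x t))‖)
            (𝓝[Icc t₀ T] t) (𝓝 (‖DΦ τ t (Φ t τ (x t)) - DΦ τ t (Φ t τ (x t))‖)) :=
          (hH.sub (continuousWithinAt_const (b := DΦ τ t (Φ t τ (x t))))).norm
        have h3 : ‖DΦ τ t (Φ t τ (x t)) - DΦ τ t (Φ t τ (x t))‖ = (0:ℝ) := by
          rw [sub_self, norm_zero]
        rw [← h3]
        exact h2
      have hb : Tendsto (fun t' => LD * ‖Φ t' τ (x t') - Φ t τ (x t)‖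
          + ‖DΦ τ t' (Φ t τ (x t)) - DΦ τ t (Φ t τ (x t))‖) (𝓝[Icc t₀ T] t) (𝓝 0) := by
        have h00 : LD * 0 + 0 = (0:ℝ) := by ring
        rw [← h00]
        exact (hb1.const_mul LD).add hb2
      refine squeeze_zero' (Eventually.of_forall fun t' => norm_nonneg _) ?_ hb
      filter_upwards [eventually_mem_nhdsWithin] with t' ht'
      calc ‖Q t' - Q t‖
          ≤ ‖DΦ τ t' (Φ t' τ (x t')) - DΦ τ t' (Φ t τ (x t))‖
            + ‖DΦ τ t' (Φ t τ (x t)) - DΦ τ t (Φ t τ (x t))‖ :=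
            norm_sub_le_norm_sub_add_norm_sub _ _ _
        _ ≤ LD * ‖Φ t' τ (x t') - Φ t τ (x t)‖
            + ‖DΦ τ t' (Φ t τ (x t)) - DΦ τ t (Φ t τ (x t))‖ :=
            add_le_add (hDΦ_lip τ hτI t' ht' _ _) le_rfl
    have hF_cont : ContinuousOn F (Icc t₀ T) := by
      have hFeq : F = fun t => Ring.inverse (Q t) := funext hFinv
      rw [hFeq]
      intro t htI
      have hca : ContinuousAt (Ring.inverse :
          (EuclideanSpace ℝ (Fin d) →L[ℝ] EuclideanSpace ℝ (Fin d)) →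
          (EuclideanSpace ℝ (Fin d) →L[ℝ] EuclideanSpace ℝ (Fin d))) (Q t) :=
        NormedRing.inverse_continuousAt (⟨Q t, F t, hmul1 t, hmul2 t⟩ :
          (EuclideanSpace ℝ (Fin d) →L[ℝ] EuclideanSpace ℝ (Fin d))ˣ)
      exact hca.comp_continuousWithinAt (hQ_cont t htI)
    set K : ℝ → (EuclideanSpace ℝ (Fin d) →L[ℝ] EuclideanSpace ℝ (Fin d)) :=
      fun t => (F t).comp (Bm t (x t)) with hKdef
    have hKker : Kker τ DΦ Bm x = K := rfl
    have hBx : AEStronglyMeasurable (fun t => Bm t (x t)) μ := by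
      have hxAE : AEMeasurable x μ :=
        (hxcont.mono Ioc_subset_Icc_self).aemeasurable measurableSet_Ioc
      have hp : AEMeasurable (fun t => ((x t, t) : EuclideanSpace ℝ (Fin d) × ℝ)) μ :=
        hxAE.prodMk aemeasurable_id
      exact hBusm.aestronglyMeasurable.comp_aemeasurable hp
    have hF_meas : AEStronglyMeasurable F μ :=
      (hF_cont.mono Ioc_subset_Icc_self).aestronglyMeasurable measurableSet_Ioc
    have hcompC : Continuous (fun p :
        (EuclideanSpace ℝ (Fin d) →L[ℝ] EuclideanSpace ℝ (Fin d)) ×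
        (EuclideanSpace ℝ (Fin d) →L[ℝ] EuclideanSpace ℝ (Fin d)) => p.1.comp p.2) :=
      (isBoundedBilinearMap_comp (𝕜 := ℝ)).continuous
    have hK_meas : AEStronglyMeasurable K μ := by
      have := hcompC.comp_aestronglyMeasurable (hF_meas.prodMk hBx)
      exact this
    have hK_bound : ∀ t ∈ Icc t₀ T, ‖K t‖ ≤ eΔ * Bsup := by
      intro t htI
      calc ‖(F t).comp (Bm t (x t))‖ ≤ ‖F t‖ * ‖Bm t (x t)‖ :=
            ContinuousLinearMap.opNorm_comp_le _ _
        _ ≤ eΔ * Bsup :=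
            mul_le_mul (hDΦ_norm t htI τ hτI _) (hBsup t htI _) (norm_nonneg _) heΔpos.le
    have hadj_meas : AEStronglyMeasurable
        (fun t => ContinuousLinearMap.adjoint (K t)) μ :=
      (ContinuousLinearMap.adjoint (𝕜 := ℝ)
        (E := EuclideanSpace ℝ (Fin d)) (F := EuclideanSpace ℝ (Fin d))
        ).continuous.comp_aestronglyMeasurable hK_meas
    have hM_meas : AEStronglyMeasurable
        (fun t => (K t).comp (ContinuousLinearMap.adjoint (K t))) μ := by
      have := hcompC.comp_aestronglyMeasurable (hK_meas.prodMk hadj_meas)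
      exact this
    have hM_int : Integrable
        (fun t => (K t).comp (ContinuousLinearMap.adjoint (K t))) μ := by
      refine Integrable.mono' (integrable_const ((eΔ * Bsup)^2)) hM_meas ?_
      filter_upwards [ae_restrict_mem measurableSet_Ioc] with t htm
      have h1 : ‖K t‖ ≤ eΔ * Bsup := hK_bound t (Ioc_subset_Icc_self htm)
      have h2 : ‖ContinuousLinearMap.adjoint (K t)‖ = ‖K t‖ :=
        (ContinuousLinearMap.adjoint (𝕜 := ℝ)).norm_map (K t)
      calc ‖(K t).comp (ContinuousLinearMap.adjoint (K t))‖
          ≤ ‖K t‖ * ‖ContinuousLinearMap.adjoint (K t)‖ :=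
            ContinuousLinearMap.opNorm_comp_le _ _
        _ ≤ (eΔ * Bsup)^2 := by
            rw [h2]
            nlinarith [norm_nonneg (K t), mul_nonneg heΔpos.le hBsup0]
    -- express the quadratic form as an integral
    have hgram : ⟪y, gram t₀ T τ DΦ Bm x y⟫
        = ∫ t, ‖ContinuousLinearMap.adjoint (K t) y‖^2 ∂μ := by
      have h1 : gram t₀ T τ DΦ Bm x
          = ∫ t, (K t).comp (ContinuousLinearMap.adjoint (K t)) ∂μ := by
        rw [gram, hKker, intervalIntegral.integral_of_le ht.le]
      have h2 : (gram t₀ T τ DΦ Bm x) y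
          = ∫ t, ((K t).comp (ContinuousLinearMap.adjoint (K t))) y ∂μ := by
        rw [h1]
        exact ContinuousLinearMap.integral_apply hM_int y
      have hMy_int : Integrable
          (fun t => ((K t).comp (ContinuousLinearMap.adjoint (K t))) y) μ :=
        hM_int.apply_continuousLinearMap y
      have h3 : ∀ t : ℝ, ⟪y, ((K t).comp (ContinuousLinearMap.adjoint (K t))) y⟫
          = ‖ContinuousLinearMap.adjoint (K t) y‖^2 := by
        intro t
        have : ((K t).comp (ContinuousLinearMap.adjoint (K t))) y
            = (K t) (ContinuousLinearMap.adjoint (K t) y) := rfl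
        rw [this, ← ContinuousLinearMap.adjoint_inner_left]
        exact real_inner_self_eq_norm_sq _
      calc ⟪y, gram t₀ T τ DΦ Bm x y⟫
          = ⟪y, ∫ t, ((K t).comp (ContinuousLinearMap.adjoint (K t))) y ∂μ⟫ := by rw [h2]
        _ = ∫ t, ⟪y, ((K t).comp (ContinuousLinearMap.adjoint (K t))) y⟫ ∂μ :=
            (integral_inner hMy_int y).symm
        _ = ∫ t, ‖ContinuousLinearMap.adjoint (K t) y‖^2 ∂μ := by
            congr 1
            funext t
            exact h3 t
    -- pointwise coercivity
    set c := Real.exp (-(Λ₁ * (T - t₀))) with hc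
    have hcpos : (0:ℝ) < c := Real.exp_pos _
    have hceΔ : c * eΔ = 1 := by
      rw [hc, heΔ, ← Real.exp_add]; simp
    have hptwise : ∀ᵐ t ∂μ,
        (c * ‖y‖ * b t)^2 ≤ ‖ContinuousLinearMap.adjoint (K t) y‖^2 := by
      filter_upwards [hBcoer, ae_restrict_mem measurableSet_Ioc] with t hB htm
      have htI : t ∈ Icc t₀ T := Ioc_subset_Icc_self htm
      have hid : ContinuousLinearMap.adjoint (Q t)
          (ContinuousLinearMap.adjoint (F t) y) = y := by
        have hcmp : (ContinuousLinearMap.adjoint (Q t)).comp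
            (ContinuousLinearMap.adjoint (F t))
            = ContinuousLinearMap.id ℝ (EuclideanSpace ℝ (Fin d)) := by
          rw [← ContinuousLinearMap.adjoint_comp, hFQ t, ContinuousLinearMap.adjoint_id]
        calc ContinuousLinearMap.adjoint (Q t) (ContinuousLinearMap.adjoint (F t) y)
            = ((ContinuousLinearMap.adjoint (Q t)).comp
                (ContinuousLinearMap.adjoint (F t))) y := rfl
          _ = y := by rw [hcmp]; rfl
      have hQnorm : ‖Q t‖ ≤ eΔ := hDΦ_norm τ hτI t htI _
      have hFy : c * ‖y‖ ≤ ‖ContinuousLinearMap.adjoint (F t) y‖ := by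
        have h1 : ‖y‖ ≤ eΔ * ‖ContinuousLinearMap.adjoint (F t) y‖ := by
          calc ‖y‖ = ‖ContinuousLinearMap.adjoint (Q t)
                (ContinuousLinearMap.adjoint (F t) y)‖ := by rw [hid]
            _ ≤ ‖ContinuousLinearMap.adjoint (Q t)‖
                * ‖ContinuousLinearMap.adjoint (F t) y‖ :=
                ContinuousLinearMap.le_opNorm _ _
            _ ≤ eΔ * ‖ContinuousLinearMap.adjoint (F t) y‖ := by
                apply mul_le_mul_of_nonneg_right _ (norm_nonneg _)
                rw [(ContinuousLinearMap.adjoint (𝕜 := ℝ)).norm_map]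
                exact hQnorm
        nlinarith [hcpos, hceΔ, norm_nonneg (ContinuousLinearMap.adjoint (F t) y)]
      have hKadj : ContinuousLinearMap.adjoint (K t) y
          = ContinuousLinearMap.adjoint (Bm t (x t))
            (ContinuousLinearMap.adjoint (F t) y) := by
        have h4 : ContinuousLinearMap.adjoint (K t)
            = (ContinuousLinearMap.adjoint (Bm t (x t))).comp
              (ContinuousLinearMap.adjoint (F t)) :=
          ContinuousLinearMap.adjoint_comp _ _
        rw [h4]; rfl
      have hfinal : c * ‖y‖ * b t ≤ ‖ContinuousLinearMap.adjoint (K t) y‖ := by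
        rw [hKadj]
        calc c * ‖y‖ * b t = b t * (c * ‖y‖) := by ring
          _ ≤ b t * ‖ContinuousLinearMap.adjoint (F t) y‖ :=
              mul_le_mul_of_nonneg_left hFy (hbnn t)
          _ ≤ ‖ContinuousLinearMap.adjoint (Bm t (x t))
              (ContinuousLinearMap.adjoint (F t) y)‖ := hB (x t) _
      exact pow_le_pow_left₀
        (mul_nonneg (mul_nonneg hcpos.le (norm_nonneg _)) (hbnn t)) hfinal 2
    have hf_int : Integrable (fun t => ‖ContinuousLinearMap.adjoint (K t) y‖^2) μ := by
      have hcont : Continuous (fun A : EuclideanSpace ℝ (Fin d) →L[ℝ]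
          EuclideanSpace ℝ (Fin d) => ‖ContinuousLinearMap.adjoint A y‖^2) := by
        fun_prop
      have hmeas : AEStronglyMeasurable
          (fun t => ‖ContinuousLinearMap.adjoint (K t) y‖^2) μ :=
        hcont.comp_aestronglyMeasurable hK_meas
      refine Integrable.mono' (integrable_const ((eΔ * Bsup * ‖y‖)^2)) hmeas ?_
      filter_upwards [ae_restrict_mem measurableSet_Ioc] with t htm
      have h1 : ‖ContinuousLinearMap.adjoint (K t) y‖ ≤ eΔ * Bsup * ‖y‖ := by
        calc ‖ContinuousLinearMap.adjoint (K t) y‖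
            ≤ ‖ContinuousLinearMap.adjoint (K t)‖ * ‖y‖ :=
              ContinuousLinearMap.le_opNorm _ _
          _ = ‖K t‖ * ‖y‖ := by
              rw [(ContinuousLinearMap.adjoint (𝕜 := ℝ)).norm_map]
          _ ≤ eΔ * Bsup * ‖y‖ :=
              mul_le_mul_of_nonneg_right
                (hK_bound t (Ioc_subset_Icc_self htm)) (norm_nonneg _)
      rw [Real.norm_eq_abs, abs_of_nonneg (sq_nonneg _)]
      exact pow_le_pow_left₀ (norm_nonneg _) h1 2
    have hg_int : Integrable (fun t => (c * ‖y‖ * b t)^2) μ := by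
      have : (fun t => (c * ‖y‖ * b t)^2) = fun t => (c * ‖y‖)^2 * (b t)^2 := by
        funext t; ring
      rw [this]
      exact hb2_int.const_mul _
    have hmono := integral_mono_ae hg_int hf_int hptwise
    have hgint_eq : ∫ t, (c * ‖y‖ * b t)^2 ∂μ = (c * ‖y‖)^2 * ∫ t, (b t)^2 ∂μ := by
      rw [← MeasureTheory.integral_const_mul]
      congr 1; funext t; ring
    rw [hgram, hbeq]
    calc Real.exp (-2 * Λ₁ * (T - t₀)) * (∫ t, b t ∂μ) ^ 2 / (T - t₀) * ‖y‖ ^ 2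
        ≤ (c * ‖y‖)^2 * ∫ t, (b t)^2 ∂μ := by
          have hc2 : Real.exp (-2 * Λ₁ * (T - t₀)) = c^2 := by
            rw [hc, sq, ← Real.exp_add]
            congr 1
            ring
          have h1 : (∫ t, b t ∂μ)^2 / (T - t₀) ≤ ∫ t, (b t)^2 ∂μ :=
            (div_le_iff₀ hΔ).2 (by linarith [hCS])
          calc Real.exp (-2 * Λ₁ * (T - t₀)) * (∫ t, b t ∂μ) ^ 2 / (T - t₀) * ‖y‖ ^ 2
              = (c * ‖y‖)^2 * ((∫ t, b t ∂μ)^2 / (T - t₀)) := by rw [hc2]; ring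
            _ ≤ (c * ‖y‖)^2 * ∫ t, (b t)^2 ∂μ :=
              mul_le_mul_of_nonneg_left h1 (sq_nonneg _)
      _ = ∫ t, (c * ‖y‖ * b t)^2 ∂μ := hgint_eq.symm
      _ ≤ ∫ t, ‖ContinuousLinearMap.adjoint (K t) y‖^2 ∂μ := hmono
  -- the lambdaMin bound
  have hlam : ∀ (x0 : EuclideanSpace ℝ (Fin d)) (u : ℝ → EuclideanSpace ℝ (Fin d)),
      Adm t₀ T u →
      ((T - t₀) * Real.exp (2 * Λ₁ * (T - t₀)) * ((∫ t in t₀..T, b t) ^ 2)⁻¹)⁻¹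
        ≤ lambdaMin (gram t₀ T τ DΦ Bm (xSol x0 u)) := by
    intro x0 u hu
    have hCinv : ((T - t₀) * Real.exp (2 * Λ₁ * (T - t₀)) * ((∫ t in t₀..T, b t) ^ 2)⁻¹)⁻¹
        = Real.exp (-2 * Λ₁ * (T - t₀)) * (∫ t in t₀..T, b t) ^ 2 / (T - t₀) := by
      have he : Real.exp (-2 * Λ₁ * (T - t₀)) = (Real.exp (2 * Λ₁ * (T - t₀)))⁻¹ := by
        rw [← Real.exp_neg]; congr 1; ring
      rw [he, mul_inv, mul_inv, inv_inv]
      ring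
    haveI : Nontrivial (EuclideanSpace ℝ (Fin d)) := by
      refine nontrivial_of_ne (EuclideanSpace.single (⟨0, hd⟩ : Fin d) (1:ℝ)) 0 ?_
      intro h
      have h2 := congrArg norm h
      rw [EuclideanSpace.norm_single, norm_one, norm_zero] at h2
      exact one_ne_zero h2
    haveI : Nonempty (Metric.sphere (0 : EuclideanSpace ℝ (Fin d)) 1) :=
      (NormedSpace.sphere_nonempty.mpr zero_le_one).to_subtype
    rw [hCinv, lambdaMin]
    refine le_ciInf fun z => ?_
    have hz : ‖(z : EuclideanSpace ℝ (Fin d))‖ = 1 := by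
      have := z.2
      simpa [mem_sphere_iff_norm] using this
    have h := main x0 u hu (z : EuclideanSpace ℝ (Fin d))
    rw [hz] at h
    simpa using h
  intro x0 u hu
  refine ⟨main x0 u hu, hlam x0 u hu, ?_⟩
  ext v
  simp only [Fcl, mem_setOf_eq]
  exact ⟨fun h => h.1, fun h => ⟨h, hlam x0 v h⟩⟩
end
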